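/- Let ξ ∈ F̄^× have odd order and let z ∈ F̄^× satisfy z^{q−η} = 1. Then for every integer α ≥ 0 the following are equivalent: (a) there exists an integer k ≥ 0 such that z·ξ = ξ^{(ηq)^k}; (b) there exists an integer m ≥ 0 such that z·ξ = ξ^{(ηq)^{2^α · m}}. (In the paper's language: for Γ ∈ ℱ whose roots have odd order, z.Γ = Γ if and only if z.Γ_{(α)} = Γ_{(α)} for every α ≥ 0.) -/

import Mathlib

/-!
For `Γ ∈ ℱ` whose roots have odd order: `z.Γ = Γ` if and only if
`z.Γ_{(α)} = Γ_{(α)}` for every `α ≥ 0`.  Concretely: for `ξ` in the multiplicative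
group of an algebraic closure `F̄` of `𝔽_q` of odd order, and `z` with `z^{q-η} = 1`,
there exists `k ≥ 0` with `z·ξ = ξ^{(ηq)^k}` if and only if for every `α ≥ 0` there
exists `m ≥ 0` with `z·ξ = ξ^{(ηq)^{2^α·m}}`.
-/

/-- If every prime factor of `n` divides `w - 1`, then `n ∣ w ^ n - 1`. -/
lemma aux_rad_dvd (w : ℤ) : ∀ n : ℕ,
    (∀ p : ℕ, p.Prime → p ∣ n → (p : ℤ) ∣ w - 1) → (n : ℤ) ∣ w ^ n - 1 := by
  intro n
  induction n using Nat.strong_induction_on with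
  | _ n ih =>
    intro h
    rcases Nat.eq_zero_or_pos n with h0 | h1
    · subst h0; simp
    rcases eq_or_lt_of_le (show 1 ≤ n from h1) with h1' | h2
    · rw [← h1']; simp
    have hn1 : n ≠ 1 := by omega
    have hpp : n.minFac.Prime := Nat.minFac_prime hn1
    obtain ⟨m, hm⟩ := Nat.minFac_dvd n
    set p := n.minFac with hp
    have hmpos : 0 < m := by
      rcases Nat.eq_zero_or_pos m with h | h
      · subst h; rw [mul_zero] at hm; omega
      · exact h
    have hmlt : m < n := by
      have h2p := hpp.two_le
      nlinarith
    have hmd : (m : ℤ) ∣ w ^ m - 1 := by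
      refine ih m hmlt (fun r hr hrd => h r hr ?_)
      exact hrd.trans ⟨p, by rw [hm, mul_comm]⟩
    have hw1 : (p : ℤ) ∣ w - 1 := h p hpp ⟨m, hm⟩
    have hwcast : (w : ZMod p) = 1 := by
      have := (ZMod.intCast_zmod_eq_zero_iff_dvd (w - 1) p).2 hw1
      push_cast at this
      linear_combination this
    have hsum : (p : ℤ) ∣ ∑ i ∈ Finset.range p, (w ^ m) ^ i := by
      refine (ZMod.intCast_zmod_eq_zero_iff_dvd _ p).1 ?_
      push_cast
      simp [hwcast]
    have key : w ^ n - 1 = (∑ i ∈ Finset.range p, (w ^ m) ^ i) * (w ^ m - 1) := by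
      rw [geom_sum_mul, hm, mul_comm p m, pow_mul]
    rw [key, hm]
    push_cast
    exact mul_dvd_mul hsum hmd

theorem odd_order_orbit_two_power
    (q : ℕ) (hq : IsPrimePow q) (hqodd : Odd q)
    (η : ℤ) (hη : η = 1 ∨ η = -1)
    (K : Type) [Field K] [Fintype K] (hK : Fintype.card K = q)
    (F : Type) [Field F] [Algebra K F] [IsAlgClosure K F]
    (ξ z : Fˣ) (hξ : Odd (orderOf ξ)) (hz : z ^ ((q : ℤ) - η) = 1) :
    ∀ α : ℕ,
      ((∃ k : ℕ, z * ξ = ξ ^ ((η * (q : ℤ)) ^ k)) ↔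
        (∃ m : ℕ, z * ξ = ξ ^ ((η * (q : ℤ)) ^ (2 ^ α * m)))) := by
  intro α
  constructor
  · rintro ⟨k, hk⟩
    set u : ℤ := η * (q : ℤ) with hu
    set n : ℕ := orderOf ξ with hn
    have hη2 : η * η = 1 := by rcases hη with h | h <;> simp [h]
    -- z ^ (u - 1) = 1
    have hz2 : z ^ (u - 1) = 1 := by
      have heq : u - 1 = ((q : ℤ) - η) * η := by
        rw [hu]; ring_nf; linear_combination (1 : ℤ) * hη2
      rw [heq, zpow_mul, hz, one_zpow]
    -- z = ξ ^ (u ^ k - 1)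
    have hzξ : z = ξ ^ (u ^ k - 1) := by
      have h1 : z = ξ ^ (u ^ k) * ξ⁻¹ := eq_mul_inv_iff_mul_eq.2 hk
      rw [h1, zpow_sub, zpow_one]
    -- divisibility
    have hdvd : (n : ℤ) ∣ (u ^ k - 1) * (u - 1) := by
      rw [hn]
      rw [orderOf_dvd_iff_zpow_eq_one]
      rw [zpow_mul, ← hzξ, hz2]
    have hprimes : ∀ p : ℕ, p.Prime → p ∣ n → (p : ℤ) ∣ u ^ k - 1 := by
      intro p hpp hpn
      have hp' : (p : ℤ) ∣ (u ^ k - 1) * (u - 1) :=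
        (Int.natCast_dvd_natCast.2 hpn).trans hdvd
      have hpZ : Prime (p : ℤ) := Nat.prime_iff_prime_int.1 hpp
      rcases hpZ.dvd_mul.1 hp' with h | h
      · exact h
      · exact h.trans (by simpa using sub_dvd_pow_sub_pow u 1 k)
    have hN : (n : ℤ) ∣ (u ^ k) ^ n - 1 := aux_rad_dvd (u ^ k) n hprimes
    -- find t with 2^α ∣ 1 + n * t
    have hnodd : Odd n := hξ
    have hcop : Nat.Coprime n (2 ^ α) :=
      (Nat.coprime_two_right.2 hnodd).pow_right α
    have ht : ∃ t : ℕ, 2 ^ α ∣ 1 + n * t := by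
      haveI : NeZero (2 ^ α : ℕ) := ⟨pow_ne_zero _ two_ne_zero⟩
      refine ⟨(-(n : ZMod (2 ^ α))⁻¹).val, ?_⟩
      refine (ZMod.natCast_eq_zero_iff _ _).1 ?_
      push_cast
      rw [ZMod.natCast_val, ZMod.cast_id]
      have hinv : (n : ZMod (2 ^ α)) * (n : ZMod (2 ^ α))⁻¹ = 1 :=
        ZMod.coe_mul_inv_eq_one n hcop
      rw [mul_neg, hinv]
      ring
    obtain ⟨t, s, hs⟩ := ht
    refine ⟨k * s, ?_⟩
    have hexp : 2 ^ α * (k * s) = k + k * n * t := by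
      calc 2 ^ α * (k * s) = k * (2 ^ α * s) := by ring
        _ = k * (1 + n * t) := by rw [← hs]
        _ = k + k * n * t := by ring
    have hdvd2 : (n : ℤ) ∣ u ^ (2 ^ α * (k * s)) - u ^ k := by
      have h1 : (n : ℤ) ∣ ((u ^ k) ^ n) ^ t - 1 :=
        hN.trans (by simpa using sub_dvd_pow_sub_pow ((u ^ k) ^ n) 1 t)
      have h2 : u ^ (2 ^ α * (k * s)) - u ^ k = u ^ k * (((u ^ k) ^ n) ^ t - 1) := by
        rw [hexp, pow_add, ← pow_mul, ← pow_mul]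
        ring
      rw [h2]
      exact h1.mul_left _
    have hfin : ξ ^ (u ^ (2 ^ α * (k * s))) = ξ ^ (u ^ k) := by
      have : ξ ^ (u ^ (2 ^ α * (k * s)) - u ^ k) = 1 :=
        orderOf_dvd_iff_zpow_eq_one.1 hdvd2
      calc ξ ^ (u ^ (2 ^ α * (k * s)))
          = ξ ^ (u ^ k + (u ^ (2 ^ α * (k * s)) - u ^ k)) := by ring_nf
        _ = ξ ^ (u ^ k) * ξ ^ (u ^ (2 ^ α * (k * s)) - u ^ k) := zpow_add ξ _ _
        _ = ξ ^ (u ^ k) := by rw [this, mul_one]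
    rw [hk, ← hfin]
  · rintro ⟨m, hm⟩
    exact ⟨2 ^ α * m, hm⟩
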